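/- Let H be a finite-dimensional complex inner product space, let ψ_1, …, ψ_M ∈ H be unit vectors (M ≥ 1), let U and V be unitary operators on H, let c ∈ [0, 1], and let O : H →L[ℂ] H be a continuous linear operator. If |⟨U ψ_k, V ψ_k⟩| ≥ c for every k = 1, …, M, then (1/M) · Σ_{k=1}^{M} |⟨U ψ_k, O (U ψ_k)⟩ − ⟨V ψ_k, O (V ψ_k)⟩| ≤ ‖O‖ · 2·√(1 − c²). -/

import Mathlib

set_option maxHeartbeats 1000000

open scoped InnerProductSpace

private lemma inner_form_bound {H : Type*} [NormedAddCommGroup H] [InnerProductSpace ℂ H]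
    (u v : H) (hu : ‖u‖ = 1) (hv : ‖v‖ = 1) (O : H →L[ℂ] H) :
    ‖⟪u, O v⟫_ℂ‖ ≤ ‖O‖ := by
  calc ‖⟪u, O v⟫_ℂ‖ ≤ ‖u‖ * ‖O v‖ := norm_inner_le_norm _ _
    _ ≤ ‖u‖ * (‖O‖ * ‖v‖) := by
        have := O.le_opNorm v
        nlinarith [norm_nonneg u, norm_nonneg (O v), O.opNorm_nonneg]
    _ = ‖O‖ := by rw [hu, hv]; ring

private lemma pointwise_dev {H : Type*} [NormedAddCommGroup H] [InnerProductSpace ℂ H]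
    (x y : H) (hx : ‖x‖ = 1) (hy : ‖y‖ = 1) (O : H →L[ℂ] H)
    (c : ℝ) (hc0 : 0 ≤ c) (h : c ≤ ‖⟪x, y⟫_ℂ‖) :
    ‖⟪x, O x⟫_ℂ - ⟪y, O y⟫_ℂ‖ ≤ ‖O‖ * (2 * Real.sqrt (1 - c ^ 2)) := by
  set t : ℂ := ⟪x, y⟫_ℂ with ht
  set α : ℝ := ‖t‖ with hα
  have hα0 : 0 ≤ α := norm_nonneg _
  have hα1 : α ≤ 1 := by
    have := norm_inner_le_norm (𝕜 := ℂ) x y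
    rwa [hx, hy, one_mul] at this
  have hcα : c ≤ α := h
  -- phase factor
  set σ : ℂ := if t = 0 then 1 else (α : ℂ) / t with hσ
  have hσnorm : ‖σ‖ = 1 := by
    by_cases h0 : t = 0
    · simp [hσ, h0]
    · simp only [hσ, if_neg h0]
      rw [norm_div, Complex.norm_real, Real.norm_eq_abs, abs_of_nonneg hα0, hα]
      exact div_self (norm_ne_zero_iff.mpr h0)
  have hσt : σ * t = (α : ℂ) := by
    by_cases h0 : t = 0
    · simp [hσ, h0, hα, ht, h0]
    · simp only [hσ, if_neg h0]
      field_simp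
  set y' : H := σ • y with hy'
  have hy'norm : ‖y'‖ = 1 := by rw [hy', norm_smul, hσnorm, hy, one_mul]
  have hxy' : ⟪x, y'⟫_ℂ = (α : ℂ) := by
    rw [hy', inner_smul_right, ← ht, hσt]
  have hy'x : ⟪y', x⟫_ℂ = (α : ℂ) := by
    rw [← inner_conj_symm, hxy', Complex.conj_ofReal]
  have hσσ : (starRingEnd ℂ) σ * σ = 1 := by
    have hns : Complex.normSq σ = 1 := by
      rw [Complex.normSq_eq_norm_sq, hσnorm]; norm_num
    rw [mul_comm, Complex.mul_conj, hns, Complex.ofReal_one]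
  have hOy' : ⟪y', O y'⟫_ℂ = ⟪y, O y⟫_ℂ := by
    rw [hy', map_smul, inner_smul_left, inner_smul_right, ← mul_assoc, hσσ, one_mul]
  have hxx : ⟪x, x⟫_ℂ = 1 := by
    rw [inner_self_eq_norm_sq_to_K, hx]; norm_num
  have hy'y' : ⟪y', y'⟫_ℂ = 1 := by
    rw [inner_self_eq_norm_sq_to_K, hy'norm]; norm_num
  set v : H := y' - (α : ℂ) • x with hv
  have hxv : ⟪x, v⟫_ℂ = 0 := by
    rw [hv, inner_sub_right, hxy', inner_smul_right, hxx, mul_one, sub_self]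
  set β : ℝ := ‖v‖ with hβ
  have hβ0 : 0 ≤ β := norm_nonneg _
  have hvv : ⟪v, v⟫_ℂ = ((1 - α ^ 2 : ℝ) : ℂ) := by
    rw [hv]
    simp only [inner_sub_left, inner_sub_right, inner_smul_left, inner_smul_right,
      hxy', hy'x, hxx, hy'y', Complex.conj_ofReal]
    push_cast
    ring
  have hβsq : (β : ℝ) ^ 2 = 1 - α ^ 2 := by
    have h1 : ⟪v, v⟫_ℂ = ((β ^ 2 : ℝ) : ℂ) := by
      rw [inner_self_eq_norm_sq_to_K]
      norm_cast
    have := h1.symm.trans hvv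
    exact_mod_cast this
  have hβle : β ≤ Real.sqrt (1 - c ^ 2) := by
    have : β = Real.sqrt (β ^ 2) := (Real.sqrt_sq hβ0).symm
    rw [this, hβsq]
    apply Real.sqrt_le_sqrt
    nlinarith
  have hsqrt0 : 0 ≤ Real.sqrt (1 - c ^ 2) := Real.sqrt_nonneg _
  rw [← hOy']
  by_cases hv0 : v = 0
  · -- degenerate case: y' = α • x
    have hy'eq : y' = (α : ℂ) • x := by
      have := hv0; rw [hv, sub_eq_zero] at this; exact this
    have hβz : β = 0 := by rw [hβ, hv0, norm_zero]
    have hα2 : α ^ 2 = 1 := by nlinarith [hβsq]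
    rw [hy'eq, map_smul, inner_smul_left, inner_smul_right, Complex.conj_ofReal,
      ← mul_assoc]
    have : ((α : ℂ)) * (α : ℂ) = 1 := by
      norm_cast
      nlinarith
    rw [this, one_mul, sub_self, norm_zero]
    positivity
  · have hβpos : 0 < β := by
      rw [hβ]; exact norm_pos_iff.mpr hv0
    set w : H := ((β : ℂ))⁻¹ • v with hw
    have hβc : ((β : ℂ)) ≠ 0 := by exact_mod_cast ne_of_gt hβpos
    have hwv : ((β : ℂ)) • w = v := by
      rw [hw, smul_inv_smul₀ hβc]
    have hwnorm : ‖w‖ = 1 := by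
      rw [hw, norm_smul, norm_inv, Complex.norm_real, Real.norm_eq_abs,
        abs_of_pos hβpos, ← hβ]
      field_simp
    have hxw : ⟪x, w⟫_ℂ = 0 := by
      rw [hw, inner_smul_right, hxv, mul_zero]
    have hwx : ⟪w, x⟫_ℂ = 0 := by
      rw [← inner_conj_symm, hxw, map_zero]
    have hy'dec : y' = (α : ℂ) • x + (β : ℂ) • w := by
      rw [hwv, hv]; abel
    have hsum : ((α : ℂ)) ^ 2 + ((β : ℂ)) ^ 2 = 1 := by
      norm_cast
      push_cast
      nlinarith [hβsq]
    -- key algebraic identity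
    have hkey : ⟪x, O x⟫_ℂ - ⟪y', O y'⟫_ℂ =
        (β : ℂ) * (⟪(β : ℂ) • x - (α : ℂ) • w, O x⟫_ℂ - ⟪y', O w⟫_ℂ) := by
      rw [hy'dec]
      simp only [inner_add_left, inner_add_right, inner_sub_left, inner_smul_left,
        inner_smul_right, map_add, map_smul, Complex.conj_ofReal]
      linear_combination (-⟪x, O x⟫_ℂ) * hsum
    have hu1 : ‖(β : ℂ) • x - (α : ℂ) • w‖ = 1 := by
      have h1 : ⟪(β : ℂ) • x - (α : ℂ) • w, (β : ℂ) • x - (α : ℂ) • w⟫_ℂ = 1 := by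
        simp only [inner_sub_left, inner_sub_right, inner_smul_left, inner_smul_right,
          hxx, hxw, hwx, Complex.conj_ofReal]
        have hww : ⟪w, w⟫_ℂ = 1 := by
          rw [inner_self_eq_norm_sq_to_K, hwnorm]; norm_num
        rw [hww]
        linear_combination hsum
      have h3 : (‖(β : ℂ) • x - (α : ℂ) • w‖ : ℝ) ^ 2 = 1 := by
        have h2 := inner_self_eq_norm_sq_to_K (𝕜 := ℂ) ((β : ℂ) • x - (α : ℂ) • w)
        rw [h1] at h2
        have h2' : ((‖(β : ℂ) • x - (α : ℂ) • w‖ ^ 2 : ℝ) : ℂ) = ((1 : ℝ) : ℂ) := by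
          push_cast
          exact h2.symm
        exact Complex.ofReal_injective h2'
      nlinarith [norm_nonneg ((β : ℂ) • x - (α : ℂ) • w)]
    have hB : ‖⟪(β : ℂ) • x - (α : ℂ) • w, O x⟫_ℂ - ⟪y', O w⟫_ℂ‖ ≤ 2 * ‖O‖ := by
      calc ‖⟪(β : ℂ) • x - (α : ℂ) • w, O x⟫_ℂ - ⟪y', O w⟫_ℂ‖
          ≤ ‖⟪(β : ℂ) • x - (α : ℂ) • w, O x⟫_ℂ‖ + ‖⟪y', O w⟫_ℂ‖ := norm_sub_le _ _
        _ ≤ ‖O‖ + ‖O‖ := add_le_add (inner_form_bound _ _ hu1 hx O)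
            (inner_form_bound _ _ hy'norm hwnorm O)
        _ = 2 * ‖O‖ := by ring
    rw [hkey, norm_mul, Complex.norm_real, Real.norm_eq_abs, abs_of_pos hβpos]
    calc β * ‖⟪(β : ℂ) • x - (α : ℂ) • w, O x⟫_ℂ - ⟪y', O w⟫_ℂ‖
        ≤ Real.sqrt (1 - c ^ 2) * (2 * ‖O‖) :=
          mul_le_mul hβle hB (norm_nonneg _) hsqrt0
      _ = ‖O‖ * (2 * Real.sqrt (1 - c ^ 2)) := by ring

/-- Average task deviation bound: if the outputs of unitaries `U, V` have
overlap at least `c` on every state of the task ensemble `{ψ_k}`, then the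
average drift of any bounded observable over the ensemble is at most
`‖O‖ · 2√(1 − c²)`. -/
theorem average_task_deviation_bound
    {H : Type*} [NormedAddCommGroup H] [InnerProductSpace ℂ H]
    [FiniteDimensional ℂ H]
    (M : ℕ) (hM : 1 ≤ M)
    (ψ : Fin M → H) (hψ : ∀ k, ‖ψ k‖ = 1)
    (U V : H ≃ₗᵢ[ℂ] H)
    (c : ℝ) (hc0 : 0 ≤ c) (hc1 : c ≤ 1)
    (O : H →L[ℂ] H)
    (hover : ∀ k, c ≤ ‖⟪U (ψ k), V (ψ k)⟫_ℂ‖) :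
    (1 / (M : ℝ)) * ∑ k : Fin M, ‖⟪U (ψ k), O (U (ψ k))⟫_ℂ - ⟪V (ψ k), O (V (ψ k))⟫_ℂ‖ ≤
      ‖O‖ * (2 * Real.sqrt (1 - c ^ 2)) := by
  have hMpos : (0 : ℝ) < (M : ℝ) := by exact_mod_cast hM
  have hsum : ∑ k : Fin M, ‖⟪U (ψ k), O (U (ψ k))⟫_ℂ - ⟪V (ψ k), O (V (ψ k))⟫_ℂ‖ ≤
      (M : ℝ) * (‖O‖ * (2 * Real.sqrt (1 - c ^ 2))) := by
    calc ∑ k : Fin M, ‖⟪U (ψ k), O (U (ψ k))⟫_ℂ - ⟪V (ψ k), O (V (ψ k))⟫_ℂ‖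
        ≤ ∑ _k : Fin M, ‖O‖ * (2 * Real.sqrt (1 - c ^ 2)) := by
          apply Finset.sum_le_sum
          intro k _
          exact pointwise_dev (U (ψ k)) (V (ψ k))
            (by rw [U.norm_map, hψ]) (by rw [V.norm_map, hψ]) O c hc0 (hover k)
      _ = (M : ℝ) * (‖O‖ * (2 * Real.sqrt (1 - c ^ 2))) := by
          rw [Finset.sum_const, Finset.card_univ, Fintype.card_fin, nsmul_eq_mul]
  rw [div_mul_eq_mul_div, one_mul, div_le_iff₀ hMpos]
  linarith [hsum]
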